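/- arXiv:math/0103170 — 2 statements merged into one kernel-verified Lean document; each statement's English description precedes it below -/
import Mathlib

section
/- The Motzkin polynomial m(x,y) = x⁴y² + x²y⁴ - 3x²y² satisfies m(x,y) ≥ -1 for all real x, y. -/
/-- The Motzkin polynomial `m(x,y) = x⁴y² + x²y⁴ - 3x²y²` satisfies `m(x,y) ≥ -1`. -/
theorem motzkin_ge_neg_one (x y : ℝ) :
    x ^ 4 * y ^ 2 + x ^ 2 * y ^ 4 - 3 * x ^ 2 * y ^ 2 ≥ -1 := by
  nlinarith [sq_nonneg (x*y*(x^2+y^2-2)), sq_nonneg (x^2-y^2), sq_nonneg (x*y-1), sq_nonneg (x*y+1), sq_nonneg (x*y), sq_nonneg (x^2*y-y), sq_nonneg (x*y^2-x)]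
end

section
/- For every real number λ, the polynomial m(x,y) - λ, where m(x,y) = x⁴y² + x²y⁴ - 3x²y² is the Motzkin polynomial, is not a sum of squares of polynomials in ℝ[x,y]. -/
open MvPolynomial

/-- A polynomial is a sum of squares. -/
def IsSOS {σ : Type*} (p : MvPolynomial σ ℝ) : Prop :=
  ∃ (k : ℕ) (h : Fin k → MvPolynomial σ ℝ), p = ∑ i, (h i) ^ 2

lemma fr_real {k : ℕ} (g : Fin k → ℝ) (h : ∑ i, g i ^ 2 = 0) : ∀ i, g i = 0 := by
  intro i
  have h1 : ∀ j ∈ Finset.univ, (0:ℝ) ≤ g j ^ 2 := fun j _ => sq_nonneg _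
  have h2 := (Finset.sum_eq_zero_iff_of_nonneg h1).mp h i (Finset.mem_univ i)
  exact pow_eq_zero_iff (two_ne_zero) |>.mp h2

lemma fr_polyreal {k : ℕ} (g : Fin k → Polynomial ℝ) (h : ∑ i, g i ^ 2 = 0) :
    ∀ i, g i = 0 := by
  intro i
  apply Polynomial.funext
  intro x
  have hx : ∑ j, (g j).eval x ^ 2 = 0 := by
    have h2 := congrArg (Polynomial.eval x) h
    simpa [Polynomial.eval_finset_sum] using h2
  simpa using fr_real _ hx i

open Polynomial in
lemma coeff_sq_two_mul {R : Type*} [CommRing R] (p : R[X]) {d : ℕ} (hd : p.natDegree ≤ d) :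
    (p ^ 2).coeff (2 * d) = p.coeff d ^ 2 := by
  rcases lt_or_eq_of_le hd with hlt | heq
  · have h1 : (p ^ 2).natDegree < 2 * d :=
      lt_of_le_of_lt natDegree_pow_le (by omega)
    rw [coeff_eq_zero_of_natDegree_lt h1, coeff_eq_zero_of_natDegree_lt hlt]
    ring
  · subst heq
    rw [sq, sq, two_mul]
    have hc := coeff_mul_degree_add_degree p p
    rw [hc]
    rfl

open Polynomial in
lemma sos_natDegree_le {R : Type*} [CommRing R]
    (hFR : ∀ (k : ℕ) (g : Fin k → R), ∑ i, g i ^ 2 = 0 → ∀ i, g i = 0)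
    {k : ℕ} (H : Fin k → R[X]) {n : ℕ}
    (hn : (∑ i, H i ^ 2).natDegree ≤ 2 * n) : ∀ i, (H i).natDegree ≤ n := by
  by_contra hc
  push_neg at hc
  obtain ⟨i0, hi0⟩ := hc
  set d := Finset.univ.sup (fun i => (H i).natDegree) with hdd
  have hdn : n < d :=
    lt_of_lt_of_le hi0 (Finset.le_sup (f := fun i => (H i).natDegree) (Finset.mem_univ i0))
  obtain ⟨j, -, hj⟩ := Finset.exists_mem_eq_sup Finset.univ
    ⟨i0, Finset.mem_univ i0⟩ (fun i => (H i).natDegree)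
  have hcoeff : (∑ i, H i ^ 2).coeff (2 * d) = 0 :=
    coeff_eq_zero_of_natDegree_lt (by omega)
  rw [finset_sum_coeff] at hcoeff
  have hrw : ∀ i ∈ Finset.univ, ((H i) ^ 2).coeff (2 * d) = (H i).coeff d ^ 2 :=
    fun i _ => coeff_sq_two_mul _ (Finset.le_sup (f := fun i => (H i).natDegree) (Finset.mem_univ i))
  rw [Finset.sum_congr rfl hrw] at hcoeff
  have hz := hFR _ _ hcoeff j
  rw [← hdd] at hj
  have hjne : H j ≠ 0 := by
    intro h0
    rw [h0] at hj
    simp only [natDegree_zero] at hj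
    omega
  rw [hj] at hz
  exact leadingCoeff_ne_zero.mpr hjne hz

open Polynomial in
lemma coeff_mul_two {R : Type*} [CommRing R] (p q : R[X]) :
    (p * q).coeff 2 = p.coeff 0 * q.coeff 2 + p.coeff 1 * q.coeff 1 + p.coeff 2 * q.coeff 0 := by
  rw [Polynomial.coeff_mul, Finset.Nat.sum_antidiagonal_eq_sum_range_succ_mk]
  simp [Finset.sum_range_succ]

/-- For every real `λ`, `m(x,y) - λ` is not a sum of squares in `ℝ[x,y]`,
where `m` is the Motzkin polynomial. -/
theorem motzkin_not_sos (lam : ℝ) :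
    ¬ IsSOS ((X 0 ^ 4 * X 1 ^ 2 + X 0 ^ 2 * X 1 ^ 4 - 3 * X 0 ^ 2 * X 1 ^ 2
      - C lam : MvPolynomial (Fin 2) ℝ)) := by
  rintro ⟨k, h, hP⟩
  set φ : MvPolynomial (Fin 2) ℝ →ₐ[ℝ] Polynomial (Polynomial ℝ) :=
    aeval ![Polynomial.X, Polynomial.C Polynomial.X] with hφ
  set H : Fin k → Polynomial (Polynomial ℝ) := fun i => φ (h i) with hH
  have hQ : Polynomial.C ((Polynomial.X : Polynomial ℝ) ^ 2) * Polynomial.X ^ 4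
      + Polynomial.C ((Polynomial.X : Polynomial ℝ) ^ 4 - 3 * Polynomial.X ^ 2)
        * Polynomial.X ^ 2
      + Polynomial.C (-(Polynomial.C lam)) = ∑ i, H i ^ 2 := by
    have h2 := congrArg φ hP
    rw [map_sum] at h2
    simp only [map_pow] at h2
    rw [← h2]
    simp only [hφ, map_sub, map_add, map_mul, map_pow, map_ofNat, aeval_X,
      Matrix.cons_val_zero, Matrix.cons_val_one, Matrix.head_cons, aeval_C,
      Polynomial.algebraMap_apply, Algebra.algebraMap_self_apply, map_neg]
    ring
  have hQc : ∀ n : ℕ,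
      (Polynomial.C ((Polynomial.X : Polynomial ℝ) ^ 2) * Polynomial.X ^ 4
      + Polynomial.C ((Polynomial.X : Polynomial ℝ) ^ 4 - 3 * Polynomial.X ^ 2)
        * Polynomial.X ^ 2
      + Polynomial.C (-(Polynomial.C lam))).coeff n = ∑ i, (H i ^ 2).coeff n := by
    intro n
    rw [hQ, Polynomial.finset_sum_coeff]
  have hdQ : (∑ i, H i ^ 2).natDegree ≤ 2 * 2 := by
    rw [← hQ]
    apply le_trans (Polynomial.natDegree_add_le _ _)
    apply max_le
    · apply le_trans (Polynomial.natDegree_add_le _ _)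
      apply max_le
      · exact le_trans (Polynomial.natDegree_C_mul_le _ _) (by simp)
      · exact le_trans (Polynomial.natDegree_C_mul_le _ _) (by simp)
    · simp
  have hHd : ∀ i, (H i).natDegree ≤ 2 :=
    sos_natDegree_le (fun _ g hg => fr_polyreal g hg) H hdQ
  set A : Fin k → Polynomial ℝ := fun i => (H i).coeff 0 with hA
  set B : Fin k → Polynomial ℝ := fun i => (H i).coeff 1 with hB
  set Cc : Fin k → Polynomial ℝ := fun i => (H i).coeff 2 with hCc
  -- equation at X^0
  have hE0 : ∑ i, A i ^ 2 = -(Polynomial.C lam) := by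
    have h0 := hQc 0
    simp only [Polynomial.coeff_add, Polynomial.coeff_C_mul, Polynomial.coeff_X_pow,
      Polynomial.coeff_C] at h0
    norm_num at h0
    rw [h0]
    apply Finset.sum_congr rfl
    intro i _
    have e : (H i ^ 2).coeff 0 = A i ^ 2 := by
      rw [sq, Polynomial.mul_coeff_zero, ← sq]
    exact e.symm
  -- equation at X^4
  have hE4 : ∑ i, Cc i ^ 2 = (Polynomial.X : Polynomial ℝ) ^ 2 := by
    have h4 := hQc 4
    simp only [Polynomial.coeff_add, Polynomial.coeff_C_mul, Polynomial.coeff_X_pow,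
      Polynomial.coeff_C] at h4
    norm_num at h4
    rw [h4]
    apply Finset.sum_congr rfl
    intro i _
    have hc := coeff_sq_two_mul (H i) (hHd i)
    norm_num at hc
    exact hc.symm
  -- equation at X^2
  have hE2 : ∑ i, (B i ^ 2 + 2 * (A i * Cc i))
      = (Polynomial.X : Polynomial ℝ) ^ 4 - 3 * Polynomial.X ^ 2 := by
    have h2 := hQc 2
    simp only [Polynomial.coeff_add, Polynomial.coeff_C_mul, Polynomial.coeff_X_pow,
      Polynomial.coeff_C] at h2
    norm_num at h2
    rw [h2]
    apply Finset.sum_congr rfl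
    intro i _
    have e : (H i ^ 2).coeff 2 = B i ^ 2 + 2 * (A i * Cc i) := by
      rw [sq, coeff_mul_two]
      simp only [hA, hB, hCc]
      ring
    exact e.symm
  -- A i is constant
  have hAd : ∀ i, (A i).natDegree ≤ 0 := by
    have : (∑ i, A i ^ 2).natDegree ≤ 2 * 0 := by
      rw [hE0]; simp
    exact sos_natDegree_le (fun _ g hg => fr_real g hg) A this
  -- Cc i has degree ≤ 1 and zero constant coefficient
  have hCd : ∀ i, (Cc i).natDegree ≤ 1 := by
    have : (∑ i, Cc i ^ 2).natDegree ≤ 2 * 1 := by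
      rw [hE4]; norm_num [Polynomial.natDegree_X_pow]
    exact sos_natDegree_le (fun _ g hg => fr_real g hg) Cc this
  have hC2 : ∀ i, (Cc i).coeff 2 = 0 :=
    fun i => Polynomial.coeff_eq_zero_of_natDegree_lt (lt_of_le_of_lt (hCd i) (by norm_num))
  have hC0 : ∀ i, (Cc i).coeff 0 = 0 := by
    apply fr_real
    have h40 := congrArg (fun p => Polynomial.coeff p 0) hE4
    simp only [Polynomial.finset_sum_coeff] at h40
    have h40' : ∀ i ∈ Finset.univ, (Cc i ^ 2).coeff 0 = (Cc i).coeff 0 ^ 2 := by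
      intro i _
      rw [sq, Polynomial.mul_coeff_zero, ← sq]

    rw [Finset.sum_congr rfl h40'] at h40
    rw [h40]
    simp [Polynomial.coeff_X_pow]
  -- B i has zero constant coefficient
  have hB0 : ∀ i, (B i).coeff 0 = 0 := by
    apply fr_real
    have h20 := congrArg (fun p => Polynomial.coeff p 0) hE2
    simp only [Polynomial.finset_sum_coeff, Polynomial.coeff_add] at h20
    have h20' : ∀ i ∈ Finset.univ,
        (B i ^ 2).coeff 0 + (2 * (A i * Cc i)).coeff 0 = (B i).coeff 0 ^ 2 := by
      intro i _
      rw [sq, Polynomial.mul_coeff_zero, ← sq,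
        show (2 : Polynomial ℝ) * (A i * Cc i) = (2 * A i) * Cc i from by ring,
        Polynomial.mul_coeff_zero, hC0 i, mul_zero, add_zero]
    rw [Finset.sum_congr rfl h20'] at h20
    rw [h20]
    simp [Polynomial.coeff_X_pow, Polynomial.coeff_sub]
  -- final contradiction: coefficient of X^2 Y^2 is -3 and a sum of squares
  have hA1 : ∀ i, (A i).coeff 1 = 0 :=
    fun i => Polynomial.coeff_eq_zero_of_natDegree_lt (lt_of_le_of_lt (hAd i) (by norm_num))
  have hA2 : ∀ i, (A i).coeff 2 = 0 :=
    fun i => Polynomial.coeff_eq_zero_of_natDegree_lt (lt_of_le_of_lt (hAd i) (by norm_num))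
  have h22 := congrArg (fun p => Polynomial.coeff p 2) hE2
  simp only [Polynomial.finset_sum_coeff, Polynomial.coeff_add] at h22
  have h22' : ∀ i ∈ Finset.univ,
      (B i ^ 2).coeff 2 + (2 * (A i * Cc i)).coeff 2 = (B i).coeff 1 ^ 2 := by
    intro i _
    rw [sq, coeff_mul_two, hB0 i,
      show (2 : Polynomial ℝ) * (A i * Cc i) = A i * (2 * Cc i) from by ring,
      coeff_mul_two, hA1 i, hA2 i, two_mul (Cc i), Polynomial.coeff_add, hC2 i]
    ring
  rw [Finset.sum_congr rfl h22'] at h22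
  have hrhs : ((Polynomial.X : Polynomial ℝ) ^ 4 - 3 * Polynomial.X ^ 2).coeff 2 = -3 := by
    rw [Polynomial.coeff_sub,
      show (3 : Polynomial ℝ) = Polynomial.C 3 from (map_ofNat Polynomial.C 3).symm,
      Polynomial.coeff_C_mul]
    simp [Polynomial.coeff_X_pow]
  rw [hrhs] at h22
  have hnn : (0:ℝ) ≤ ∑ i, (B i).coeff 1 ^ 2 :=
    Finset.sum_nonneg fun i _ => sq_nonneg _
  rw [h22] at hnn
  linarith
end
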